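/- Let v ∈ ℝⁿ satisfy Wᵀ A v = 0. Then for every j ≥ 1, the Krylov subspace K_j(QAQ, v) = span{v, (QAQ)v, …, (QAQ)^{j−1} v} intersects the column space of W trivially: if a vector lies both in K_j(QAQ, v) and in range(W), it is the zero vector. -/

import Mathlib

open Matrix

/-- The deflation projector `Q = I - W (WᵀAW)⁻¹ Wᵀ A` used in deflated PCG. -/
noncomputable def deflationProj {n k : ℕ} (A : Matrix (Fin n) (Fin n) ℝ)
    (W : Matrix (Fin n) (Fin k) ℝ) : Matrix (Fin n) (Fin n) ℝ :=
  1 - W * (Wᵀ * A * W)⁻¹ * Wᵀ * A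

/-- The `j`-th Krylov subspace `K_j(B, v) = span {v, B v, …, B^(j-1) v}`. -/
noncomputable def krylov {n : ℕ} (B : Matrix (Fin n) (Fin n) ℝ) (v : Fin n → ℝ) (j : ℕ) :
    Submodule ℝ (Fin n → ℝ) :=
  Submodule.span ℝ (Set.range fun i : Fin j => (B ^ (i : ℕ)) *ᵥ v)

lemma E_posDef {n k : ℕ} (A : Matrix (Fin n) (Fin n) ℝ) (hA : A.PosDef)
    (W : Matrix (Fin n) (Fin k) ℝ)
    (hW : LinearIndependent ℝ (fun j : Fin k => Wᵀ j)) :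
    (Wᵀ * A * W).PosDef := by
  have hinj : ∀ c : Fin k → ℝ, W *ᵥ c = 0 → c = 0 := by
    intro c hc
    have := (Fintype.linearIndependent_iff.mp hW) c ?_
    · funext i; exact this i
    · funext i
      have := congrFun hc i
      simpa [mulVec, dotProduct, Finset.sum_apply, mul_comm, transpose_apply] using this
  refine posDef_iff_dotProduct_mulVec.mpr ⟨?_, ?_⟩
  · have hAh : Aᵀ = A := hA.isHermitian
    ext i j
    simp [Matrix.transpose_mul, Matrix.mul_assoc, hAh, conjTranspose, Matrix.IsHermitian]
  · intro c hc
    have hWc : W *ᵥ c ≠ 0 := fun h => hc (hinj c h)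
    have := hA.dotProduct_mulVec_pos hWc
    simpa [star, Matrix.dotProduct_mulVec, ← Matrix.vecMul_vecMul,
      Matrix.vecMul_transpose, Matrix.mul_assoc] using this


/-- If `Wᵀ A v = 0`, then for every `j ≥ 1` the Krylov subspace
`K_j(QAQ, v)` intersects the column space of `W` trivially. -/
theorem krylov_inter_deflation_trivial {n k : ℕ}
    (A : Matrix (Fin n) (Fin n) ℝ) (hA : A.PosDef)
    (W : Matrix (Fin n) (Fin k) ℝ)
    (hW : LinearIndependent ℝ (fun j : Fin k => Wᵀ j))
    (v : Fin n → ℝ) (hv : Wᵀ *ᵥ (A *ᵥ v) = 0) :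
    ∀ j : ℕ, 1 ≤ j → ∀ y : Fin n → ℝ,
      y ∈ krylov (deflationProj A W * A * deflationProj A W) v j →
      (∃ c : Fin k → ℝ, y = W *ᵥ c) → y = 0 := by
  have hEpd := E_posDef A hA W hW
  have hdet : (Wᵀ * A * W).det ≠ 0 := hEpd.det_pos.ne'
  have hEinv : Wᵀ * A * W * (Wᵀ * A * W)⁻¹ = 1 := Matrix.mul_nonsing_inv _ hdet.isUnit
  have hEinv' : (Wᵀ * A * W)⁻¹ * (Wᵀ * A * W) = 1 := Matrix.nonsing_inv_mul _ hdet.isUnit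
  -- WᵀA Q = 0
  have hQ : Wᵀ * A * deflationProj A W = 0 := by
    unfold deflationProj
    rw [Matrix.mul_sub, Matrix.mul_one]
    have : Wᵀ * A * (W * (Wᵀ * A * W)⁻¹ * Wᵀ * A)
        = (Wᵀ * A * W * (Wᵀ * A * W)⁻¹) * (Wᵀ * A) := by
      simp only [Matrix.mul_assoc]
    rw [this, hEinv, Matrix.one_mul, sub_self]
  set B := deflationProj A W * A * deflationProj A W with hBdef
  have hB : Wᵀ * A * B = 0 := by
    rw [hBdef, show deflationProj A W * A * deflationProj A W
        = deflationProj A W * (A * deflationProj A W) from Matrix.mul_assoc _ _ _,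
      ← Matrix.mul_assoc, hQ, Matrix.zero_mul]
  -- every element of the Krylov space is killed by WᵀA
  have key : ∀ j : ℕ, ∀ x ∈ krylov B v j, Wᵀ *ᵥ (A *ᵥ x) = 0 := by
    intro j x hx
    induction hx using Submodule.span_induction with
    | mem x hx =>
      obtain ⟨i, rfl⟩ := hx
      simp only []
      show Wᵀ *ᵥ (A *ᵥ (B ^ (i:ℕ) *ᵥ v)) = 0
      rcases Nat.eq_zero_or_pos (i : ℕ) with h0 | hpos
      · rw [h0, pow_zero, Matrix.one_mulVec]; exact hv
      · obtain ⟨m, hm⟩ := Nat.exists_eq_succ_of_ne_zero hpos.ne'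
        have h2 : Wᵀ * A * B ^ (m + 1) = 0 := by
          rw [pow_succ', ← Matrix.mul_assoc, hB, Matrix.zero_mul]
        rw [Matrix.mulVec_mulVec, Matrix.mulVec_mulVec, hm,
          Nat.succ_eq_add_one, h2, Matrix.zero_mulVec]
    | zero => simp
    | add x y _ _ hx hy => rw [Matrix.mulVec_add, Matrix.mulVec_add, hx, hy, add_zero]
    | smul a x _ hx => rw [Matrix.mulVec_smul, Matrix.mulVec_smul, hx, smul_zero]
  intro j hj y hy hc
  obtain ⟨c, rfl⟩ := hc
  have h1 : (Wᵀ * A * W) *ᵥ c = 0 := by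
    have := key j _ hy
    rwa [Matrix.mulVec_mulVec, Matrix.mulVec_mulVec] at this
  have hc0 : c = 0 := by
    have := congrArg (fun x => (Wᵀ * A * W)⁻¹ *ᵥ x) h1
    simpa [Matrix.mulVec_mulVec, hEinv'] using this
  rw [hc0, Matrix.mulVec_zero]
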